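/- Under the kinematics of Lemma 'safe distance': define the rear car's position r(t) as: r(t) = v_r·t + a_acc·t²/2 for t ∈ [0,ρ], then braking at rate a_min from velocity v_ρ = v_r + ρ·a_acc until stopping; define front car's position f(t) = d_0 + v_f·t − a_max·t²/2 until it stops at time v_f/a_max, constant thereafter. If at some time t* the two cars have equal velocity, then for all t ≥ t*, the rear car's velocity is at least the front car's velocity, and hence the gap f(t) − r(t) is non-increasing on [t*, ∞). -/

import Mathlib

open Set intervalIntegral

/-- After a time `t*` where the rear and front cars have equal velocity, the rear car's
velocity dominates the front car's, and the gap `f - r` is non-increasing on `[t*, ∞)`. -/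
theorem velocity_crossing_gap_antitone (v_r v_f ρ a_acc a_min a_max d_0 tstar : ℝ)
    (hvr : 0 ≤ v_r) (hvf : 0 ≤ v_f) (hρ : 0 < ρ)
    (hacc : 0 < a_acc) (hmin : 0 < a_min) (hlt : a_min < a_max)
    (vR : ℝ → ℝ) (vF : ℝ → ℝ) (r f : ℝ → ℝ)
    (hvR : vR = fun t => if t ≤ ρ then v_r + a_acc * t
        else max 0 (v_r + ρ * a_acc - a_min * (t - ρ)))
    (hvF : vF = fun t => max 0 (v_f - a_max * t))
    (hr : r = fun t => ∫ s in (0:ℝ)..t, vR s)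
    (hf : f = fun t => d_0 + ∫ s in (0:ℝ)..t, vF s)
    (htstar : 0 ≤ tstar) (hcross : vR tstar = vF tstar) :
    (∀ t, tstar ≤ t → vR t ≥ vF t) ∧ AntitoneOn (fun t => f t - r t) (Ici tstar) := by
  have key : ∀ t, tstar ≤ t → vR t ≥ vF t := by
    intro t ht
    subst hvR hvF
    simp only at hcross ⊢
    by_cases h1 : t ≤ ρ
    · have h2 : tstar ≤ ρ := le_trans ht h1
      rw [if_pos h2] at hcross
      rw [if_pos h1]
      have hm : v_f - a_max * tstar ≤ max 0 (v_f - a_max * tstar) := le_max_right _ _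
      rw [← hcross] at hm
      apply max_le
      · nlinarith
      · nlinarith
    · push_neg at h1
      rw [if_neg (not_le.mpr h1)]
      by_cases h2 : tstar ≤ ρ
      · rw [if_pos h2] at hcross
        have hm : v_f - a_max * tstar ≤ max 0 (v_f - a_max * tstar) := le_max_right _ _
        rw [← hcross] at hm
        apply max_le
        · exact le_max_left _ _
        · refine le_trans ?_ (le_max_right _ _)
          nlinarith [mul_nonneg hmin.le (sub_nonneg.mpr h2),
            mul_nonneg hacc.le (sub_nonneg.mpr h2),
            mul_nonneg (sub_nonneg.mpr hlt.le) (sub_nonneg.mpr ht)]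
      · push_neg at h2
        rw [if_neg (not_le.mpr h2)] at hcross
        apply max_le
        · exact le_max_left _ _
        · by_cases hpos : v_f - a_max * t ≤ 0
          · exact le_trans hpos (le_max_left _ _)
          · push_neg at hpos
            have hpos' : 0 < v_f - a_max * tstar := by nlinarith
            have hF : max 0 (v_f - a_max * tstar) = v_f - a_max * tstar :=
              max_eq_right hpos'.le
            rw [hF] at hcross
            have hRpos : 0 < v_r + ρ * a_acc - a_min * (tstar - ρ) := by
              rcases le_or_gt (v_r + ρ * a_acc - a_min * (tstar - ρ)) 0 with h | h
              · rw [max_eq_left h] at hcross; linarith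
              · exact h
            rw [max_eq_right hRpos.le] at hcross
            refine le_trans ?_ (le_max_right _ _)
            nlinarith [mul_nonneg (sub_nonneg.mpr hlt.le) (sub_nonneg.mpr ht)]
  refine ⟨key, ?_⟩
  have hcontR : Continuous vR := by
    rw [hvR]
    apply Continuous.if_le (continuous_const.add (continuous_const.mul continuous_id))
      (continuous_const.max (continuous_const.sub (continuous_const.mul
        (continuous_id.sub continuous_const)))) continuous_id continuous_const
    intro x hx
    subst hx
    simp only [Pi.add_apply, Pi.mul_apply, Pi.sub_apply, id] at hρ ⊢
    rw [sub_self, mul_zero, sub_zero, max_eq_right (by positivity)]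
    ring
  have hcontF : Continuous vF := by
    rw [hvF]
    exact continuous_const.max (continuous_const.sub (continuous_const.mul continuous_id))
  intro s hs t ht hst
  simp only [hf, hr]
  have hR1 : IntervalIntegrable vR MeasureTheory.volume 0 s := hcontR.intervalIntegrable _ _
  have hR2 : IntervalIntegrable vR MeasureTheory.volume s t := hcontR.intervalIntegrable _ _
  have hF1 : IntervalIntegrable vF MeasureTheory.volume 0 s := hcontF.intervalIntegrable _ _
  have hF2 : IntervalIntegrable vF MeasureTheory.volume s t := hcontF.intervalIntegrable _ _
  rw [← integral_add_adjacent_intervals hR1 hR2, ← integral_add_adjacent_intervals hF1 hF2]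
  have hmono : (∫ x in s..t, vF x) ≤ ∫ x in s..t, vR x :=
    integral_mono_on hst hF2 hR2 (fun x hx => key x (le_trans hs hx.1))
  linarith
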